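/- Fix β > 0. There is a constant C such that for every integer n > 1 and every continuous function f : ℝ → ℂ with f(x) → 0 as |x| → ∞, the rational interpolant R_nf belongs to L²(ℝ) and ( ∫_ℝ |R_nf(x)|² dx )^{1/2} ≤ C n (log n) sup_{x∈ℝ} |f(x)|. -/

import Mathlib

open MeasureTheory

/-- The Möbius map `M_β(x) = (x - iβ)/(x + iβ)` for real `x`. -/
noncomputable def Mob (β : ℝ) (x : ℝ) : ℂ :=
  ((x : ℂ) - Complex.I * β) / ((x : ℂ) + Complex.I * β)

/-- The change of variables `T(θ) = -β cot(θ/2)` mapping `(0, 2π)` onto `ℝ`. -/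
noncomputable def Tmap (β : ℝ) (θ : ℝ) : ℝ :=
  -β * (Real.cos (θ / 2) / Real.sin (θ / 2))

/-- Discrete Fourier coefficients `F̃_k = (1/n) ∑_{ℓ=0}^{n-1} e^{-ikθ_ℓ} F(θ_ℓ)`. -/
noncomputable def dftCoeff (n : ℕ) (F : ℝ → ℂ) (k : ℤ) : ℂ :=
  (n : ℂ)⁻¹ * ∑ ℓ ∈ Finset.range n,
    Complex.exp (-Complex.I * (k : ℂ) * ((2 * Real.pi * ℓ / n : ℝ) : ℂ)) *
      F (2 * Real.pi * ℓ / n)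

/-- The rational interpolant `R_n f(x) = ∑_{k=-n₋}^{n₊} F̃_k (M_β(x)^k − 1)`. -/
noncomputable def ratInterp (β : ℝ) (n : ℕ) (F : ℝ → ℂ) (x : ℝ) : ℂ :=
  ∑ k ∈ Finset.Icc (-(((n - 1) / 2 : ℕ) : ℤ)) ((n / 2 : ℕ) : ℤ),
    dftCoeff n F k * (Mob β x ^ k - 1)

open scoped ENNReal

lemma mob_denom_ne (β : ℝ) (hβ : 0 < β) (x : ℝ) : (x : ℂ) + Complex.I * β ≠ 0 := by
  intro h
  have := congrArg Complex.im h
  simp at this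
  linarith

lemma mob_num_ne (β : ℝ) (hβ : 0 < β) (x : ℝ) : (x : ℂ) - Complex.I * β ≠ 0 := by
  intro h
  have := congrArg Complex.im h
  simp at this
  linarith

lemma mob_ne (β : ℝ) (hβ : 0 < β) (x : ℝ) : Mob β x ≠ 0 :=
  div_ne_zero (mob_num_ne β hβ x) (mob_denom_ne β hβ x)

lemma norm_mob (β : ℝ) (hβ : 0 < β) (x : ℝ) : ‖Mob β x‖ = 1 := by
  have h1 : ((x : ℂ) - Complex.I * β) = (starRingEnd ℂ) ((x : ℂ) + Complex.I * β) := by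
    simp [map_add, Complex.conj_ofReal]
    ring
  rw [Mob, norm_div, h1, RCLike.norm_conj, div_self]
  simpa using norm_ne_zero_iff.mpr (mob_denom_ne β hβ x)

lemma normSq_mob_sub_one (β : ℝ) (hβ : 0 < β) (x : ℝ) :
    ‖Mob β x - 1‖ ^ 2 = 4 * β ^ 2 / (x ^ 2 + β ^ 2) := by
  have hd := mob_denom_ne β hβ x
  have h1 : Mob β x - 1 = (-2 * Complex.I * β) / ((x : ℂ) + Complex.I * β) := by
    rw [Mob, div_sub_one hd]
    congr 1
    ring
  rw [h1, norm_div, div_pow,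
    Complex.sq_norm, Complex.sq_norm]
  congr 1
  · simp [Complex.normSq_apply]; ring
  · simp [Complex.normSq_apply]; ring

lemma norm_pow_sub_one_le {z : ℂ} (hz : ‖z‖ = 1) (m : ℕ) :
    ‖z ^ m - 1‖ ≤ m * ‖z - 1‖ := by
  induction m with
  | zero => simp
  | succ m ih =>
    have h1 : z ^ (m + 1) - 1 = z ^ m * (z - 1) + (z ^ m - 1) := by ring
    calc ‖z ^ (m + 1) - 1‖ ≤ ‖z ^ m * (z - 1)‖ + ‖z ^ m - 1‖ := by
          rw [h1]; exact norm_add_le _ _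
      _ ≤ 1 * ‖z - 1‖ + m * ‖z - 1‖ := by
          gcongr
          rw [norm_mul, norm_pow, hz, one_pow]
      _ = (m + 1 : ℕ) * ‖z - 1‖ := by push_cast; ring

lemma norm_zpow_sub_one_le {z : ℂ} (hz : ‖z‖ = 1) (k : ℤ) :
    ‖z ^ k - 1‖ ≤ |k| * ‖z - 1‖ := by
  have hz0 : z ≠ 0 := by intro h; rw [h] at hz; simp at hz
  rcases le_or_gt 0 k with hk | hk
  · lift k to ℕ using hk
    rw [zpow_natCast]
    simpa using norm_pow_sub_one_le hz k
  · have h1 : z ^ k - 1 = z ^ k * (1 - z ^ (-k)) := by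
      rw [mul_sub, mul_one, ← zpow_add₀ hz0]
      simp
    rw [h1, norm_mul, norm_zpow, hz, one_zpow, one_mul, norm_sub_rev]
    have hk' : 0 ≤ -k := by omega
    lift (-k) to ℕ using hk' with m hm
    rw [zpow_natCast]
    have := norm_pow_sub_one_le hz m
    calc ‖z ^ m - 1‖ ≤ (m : ℝ) * ‖z - 1‖ := this
      _ = |k| * ‖z - 1‖ := by
          congr 1
          have h2 : (m : ℤ) = -k := hm
          have : |k| = (m : ℤ) := by rw [abs_of_neg hk]; omega
          exact_mod_cast congrArg (Int.cast : ℤ → ℝ) this.symm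

lemma norm_zpow_sub_one_le_two {z : ℂ} (hz : ‖z‖ = 1) (k : ℤ) :
    ‖z ^ k - 1‖ ≤ 2 := by
  calc ‖z ^ k - 1‖ ≤ ‖z ^ k‖ + ‖(1 : ℂ)‖ := norm_sub_le _ _
    _ = 2 := by rw [norm_zpow, hz, one_zpow, norm_one]; norm_num

lemma inv_sq_add_sq_eq {c : ℝ} (hc : 0 < c) :
    (fun x : ℝ => (x ^ 2 + c ^ 2)⁻¹)
      = fun x : ℝ => c⁻¹ * (c⁻¹ * (1 + (x / c) ^ 2)⁻¹) := by
  ext x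
  have h1 : (0:ℝ) < x ^ 2 + c ^ 2 := by positivity
  have h2 : (0:ℝ) < 1 + (x / c) ^ 2 := by positivity
  field_simp
  ring

lemma integrable_inv_sq_add_sq {c : ℝ} (hc : 0 < c) :
    Integrable (fun x : ℝ => (x ^ 2 + c ^ 2)⁻¹) := by
  rw [inv_sq_add_sq_eq hc]
  exact ((integrable_inv_one_add_sq.comp_div hc.ne').const_mul _).const_mul _

lemma integral_inv_sq_add_sq' {c : ℝ} (hc : 0 < c) :
    ∫ x : ℝ, (x ^ 2 + c ^ 2)⁻¹ = Real.pi / c := by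
  rw [inv_sq_add_sq_eq hc, MeasureTheory.integral_const_mul, MeasureTheory.integral_const_mul]
  have : (∫ x : ℝ, (1 + (x / c) ^ 2)⁻¹) = |c| • ∫ y : ℝ, (1 + y ^ 2)⁻¹ :=
    MeasureTheory.Measure.integral_comp_div (fun y : ℝ => (1 + y ^ 2)⁻¹) c
  rw [this, integral_univ_inv_one_add_sq, abs_of_pos hc, smul_eq_mul]
  field_simp

lemma continuous_mob_zpow (β : ℝ) (hβ : 0 < β) (k : ℤ) :
    Continuous (fun x : ℝ => Mob β x ^ k - 1) := by
  have hc : Continuous (Mob β) := by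
    apply Continuous.div
    · fun_prop
    · fun_prop
    · exact fun x => mob_denom_ne β hβ x
  exact (hc.zpow₀ k (fun x => Or.inl (mob_ne β hβ x))).sub continuous_const

lemma g_sq_le (β : ℝ) (hβ : 0 < β) (k : ℤ) (hk : k ≠ 0) (x : ℝ) :
    ‖Mob β x ^ k - 1‖ ^ 2 ≤ 8 * (k : ℝ) ^ 2 * β ^ 2 / (x ^ 2 + (k : ℝ) ^ 2 * β ^ 2) := by
  have hk1 : (1 : ℝ) ≤ (k : ℝ) ^ 2 := by
    have : (1 : ℤ) ≤ k ^ 2 := by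
      rcases lt_or_gt_of_ne hk with h | h <;> nlinarith
    exact_mod_cast this
  have hd2 : (0 : ℝ) < x ^ 2 + (k : ℝ) ^ 2 * β ^ 2 := by nlinarith [sq_nonneg x]
  have hd1 : (0 : ℝ) < x ^ 2 + β ^ 2 := by nlinarith [sq_nonneg x]
  rcases le_or_gt (x ^ 2) ((k : ℝ) ^ 2 * β ^ 2) with h | h
  · have h4 : ‖Mob β x ^ k - 1‖ ^ 2 ≤ 4 := by
      have := norm_zpow_sub_one_le_two (norm_mob β hβ x) k
      nlinarith [norm_nonneg (Mob β x ^ k - 1)]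
    have : (4 : ℝ) ≤ 8 * (k : ℝ) ^ 2 * β ^ 2 / (x ^ 2 + (k : ℝ) ^ 2 * β ^ 2) := by
      rw [le_div_iff₀ hd2]
      nlinarith
    linarith
  · have h6 := norm_zpow_sub_one_le (norm_mob β hβ x) k
    have h7 : ‖Mob β x ^ k - 1‖ ^ 2 ≤ (k : ℝ) ^ 2 * ‖Mob β x - 1‖ ^ 2 := by
      calc ‖Mob β x ^ k - 1‖ ^ 2 ≤ ((|k| : ℤ) * ‖Mob β x - 1‖) ^ 2 := by
            apply pow_le_pow_left₀ (norm_nonneg _)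
            exact_mod_cast h6
        _ = ((|k| : ℤ) : ℝ) ^ 2 * ‖Mob β x - 1‖ ^ 2 := mul_pow _ _ _
        _ = (k : ℝ) ^ 2 * ‖Mob β x - 1‖ ^ 2 := by
            congr 1
            have : ((|k| : ℤ) : ℝ) ^ 2 = ((|k| ^ 2 : ℤ) : ℝ) := by push_cast; ring
            rw [this, sq_abs]
            push_cast
            ring
    rw [normSq_mob_sub_one β hβ x] at h7
    have h8 : (k : ℝ) ^ 2 * (4 * β ^ 2 / (x ^ 2 + β ^ 2))
        ≤ 8 * (k : ℝ) ^ 2 * β ^ 2 / (x ^ 2 + (k : ℝ) ^ 2 * β ^ 2) := by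
      rw [mul_div_assoc', div_le_div_iff₀ hd1 hd2]
      nlinarith [mul_le_mul_of_nonneg_left h.le
        (by positivity : (0:ℝ) ≤ 4 * (k : ℝ) ^ 2 * β ^ 2)]
    linarith

lemma g_sq_integrable (β : ℝ) (hβ : 0 < β) (k : ℤ) :
    Integrable (fun x : ℝ => ‖Mob β x ^ k - 1‖ ^ 2) := by
  rcases eq_or_ne k 0 with rfl | hk
  · simp only [zpow_zero, sub_self, norm_zero]
    simpa using integrable_const (0 : ℝ)
  · have hc : (0 : ℝ) < |(k : ℝ)| * β := by
      have : (k : ℝ) ≠ 0 := Int.cast_ne_zero.mpr hk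
      positivity
    have hcsq : (|(k : ℝ)| * β) ^ 2 = (k : ℝ) ^ 2 * β ^ 2 := by
      rw [mul_pow, sq_abs]
    apply Integrable.mono' ((integrable_inv_sq_add_sq hc).const_mul (8 * (k : ℝ) ^ 2 * β ^ 2))
    · exact ((continuous_mob_zpow β hβ k).norm.pow 2).aestronglyMeasurable
    · filter_upwards with x
      rw [Real.norm_of_nonneg (by positivity)]
      have := g_sq_le β hβ k hk x
      rw [← hcsq, div_eq_mul_inv] at this
      exact this

lemma g_int_le (β : ℝ) (hβ : 0 < β) (k : ℤ) :
    ∫ x : ℝ, ‖Mob β x ^ k - 1‖ ^ 2 ≤ 8 * Real.pi * β * |(k : ℝ)| := by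
  rcases eq_or_ne k 0 with rfl | hk
  · simp [Real.pi_nonneg]
  · have hk0 : (k : ℝ) ≠ 0 := Int.cast_ne_zero.mpr hk
    have hc : (0 : ℝ) < |(k : ℝ)| * β := by positivity
    have hcsq : (|(k : ℝ)| * β) ^ 2 = (k : ℝ) ^ 2 * β ^ 2 := by rw [mul_pow, sq_abs]
    calc ∫ x : ℝ, ‖Mob β x ^ k - 1‖ ^ 2
        ≤ ∫ x : ℝ, 8 * (k : ℝ) ^ 2 * β ^ 2 * (x ^ 2 + (|(k : ℝ)| * β) ^ 2)⁻¹ := by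
          apply integral_mono (g_sq_integrable β hβ k)
            ((integrable_inv_sq_add_sq hc).const_mul _)
          intro x
          have := g_sq_le β hβ k hk x
          rw [div_eq_mul_inv] at this
          rwa [hcsq]
      _ = 8 * (k : ℝ) ^ 2 * β ^ 2 * (Real.pi / (|(k : ℝ)| * β)) := by
          rw [MeasureTheory.integral_const_mul, integral_inv_sq_add_sq' hc]
      _ = 8 * Real.pi * β * |(k : ℝ)| := by
          have habs : |(k : ℝ)| ≠ 0 := abs_ne_zero.mpr hk0
          field_simp
          linear_combination (-1 : ℝ) * sq_abs (k : ℝ)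

lemma g_memLp (β : ℝ) (hβ : 0 < β) (k : ℤ) :
    MemLp (fun x : ℝ => Mob β x ^ k - 1) 2 volume :=
  (memLp_two_iff_integrable_sq_norm
    (continuous_mob_zpow β hβ k).aestronglyMeasurable).mpr (g_sq_integrable β hβ k)

lemma eLpNorm_le_of_int_sq_le {g : ℝ → ℂ} {A : ℝ} (hg : MemLp g 2 volume)
    (h : (∫ x : ℝ, ‖g x‖ ^ 2) ≤ A) :
    eLpNorm g 2 volume ≤ ENNReal.ofReal (Real.sqrt A) := by
  rw [hg.eLpNorm_eq_integral_rpow_norm two_ne_zero ENNReal.ofNat_ne_top]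
  apply ENNReal.ofReal_le_ofReal
  have htr : (2 : ℝ≥0∞).toReal = 2 := by simp
  rw [htr]
  have hint : (∫ x : ℝ, ‖g x‖ ^ (2 : ℝ)) = ∫ x : ℝ, ‖g x‖ ^ 2 := by
    congr 1
    ext x
    rw [Real.rpow_two]
  rw [hint, Real.sqrt_eq_rpow, one_div]
  exact Real.rpow_le_rpow (integral_nonneg fun x => by positivity) h (by norm_num)

lemma icc_eq_map (n : ℕ) (hn : 0 < n) :
    Finset.Icc (-(((n - 1) / 2 : ℕ) : ℤ)) ((n / 2 : ℕ) : ℤ)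
      = Finset.map ⟨fun j : ℕ => (j : ℤ) - ((n - 1) / 2 : ℕ), fun a b h => by simpa using h⟩
          (Finset.range n) := by
  ext k
  simp only [Finset.mem_Icc, Finset.mem_map, Finset.mem_range, Function.Embedding.coeFn_mk]
  constructor
  · intro h
    exact ⟨(k + ((n - 1) / 2 : ℕ)).toNat, by omega, by simp; omega⟩
  · rintro ⟨j, hj, rfl⟩
    simp
    omega

lemma card_icc (n : ℕ) (hn : 0 < n) :
    (Finset.Icc (-(((n - 1) / 2 : ℕ) : ℤ)) ((n / 2 : ℕ) : ℤ)).card = n := by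
  rw [icc_eq_map n hn, Finset.card_map, Finset.card_range]

lemma sum_zpow_eq_zero (n : ℕ) (hn : 0 < n) (z : ℂ) (hz0 : z ≠ 0) (hz1 : z ≠ 1)
    (hzn : z ^ n = 1) :
    ∑ k ∈ Finset.Icc (-(((n - 1) / 2 : ℕ) : ℤ)) ((n / 2 : ℕ) : ℤ), z ^ k = 0 := by
  rw [icc_eq_map n hn, Finset.sum_map]
  show ∑ j ∈ Finset.range n, z ^ ((j : ℤ) - (((n - 1) / 2 : ℕ) : ℤ)) = 0
  have h : ∀ j : ℕ, z ^ ((j : ℤ) - (((n - 1) / 2 : ℕ) : ℤ))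
      = z ^ (-((((n - 1) / 2 : ℕ) : ℤ))) * z ^ j := by
    intro j
    rw [sub_eq_add_neg, add_comm, zpow_add₀ hz0, zpow_natCast]
  simp_rw [h]
  rw [← Finset.mul_sum, geom_sum_eq hz1, hzn]
  simp

lemma exp_prod (n : ℕ) (k : ℤ) (ℓ m : ℕ) :
    Complex.exp (-Complex.I * (k : ℂ) * ((2 * Real.pi * ℓ / n : ℝ) : ℂ)) *
      (starRingEnd ℂ) (Complex.exp (-Complex.I * (k : ℂ) * ((2 * Real.pi * m / n : ℝ) : ℂ)))
    = Complex.exp (Complex.I * (((2 * Real.pi * m / n : ℝ) : ℂ)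
        - ((2 * Real.pi * ℓ / n : ℝ) : ℂ))) ^ k := by
  have h1 : (starRingEnd ℂ) (Complex.exp (-Complex.I * (k : ℂ) * ((2 * Real.pi * m / n : ℝ) : ℂ)))
      = Complex.exp (Complex.I * (k : ℂ) * ((2 * Real.pi * m / n : ℝ) : ℂ)) := by
    rw [← Complex.exp_conj]
    congr 1
    simp only [map_mul, map_neg, Complex.conj_I, map_intCast, Complex.conj_ofReal]
    ring
  rw [h1, ← Complex.exp_add, ← Complex.exp_int_mul]
  congr 1
  ring

lemma orth_sum (n : ℕ) (hn : 0 < n) (ℓ m : ℕ) (hℓ : ℓ < n) (hm : m < n) :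
    ∑ k ∈ Finset.Icc (-(((n - 1) / 2 : ℕ) : ℤ)) ((n / 2 : ℕ) : ℤ),
      Complex.exp (-Complex.I * (k : ℂ) * ((2 * Real.pi * ℓ / n : ℝ) : ℂ)) *
        (starRingEnd ℂ) (Complex.exp (-Complex.I * (k : ℂ) * ((2 * Real.pi * m / n : ℝ) : ℂ)))
    = if ℓ = m then (n : ℂ) else 0 := by
  have hn' : (n : ℂ) ≠ 0 := Nat.cast_ne_zero.mpr hn.ne'
  simp_rw [exp_prod n _ ℓ m]
  by_cases h : ℓ = m
  · subst h
    rw [if_pos rfl]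
    simp only [sub_self, mul_zero, Complex.exp_zero, one_zpow]
    rw [Finset.sum_const, card_icc n hn, nsmul_eq_mul, mul_one]
  · rw [if_neg h]
    set w : ℂ := Complex.I * (((2 * Real.pi * m / n : ℝ) : ℂ) - ((2 * Real.pi * ℓ / n : ℝ) : ℂ))
      with hw
    apply sum_zpow_eq_zero n hn _ (Complex.exp_ne_zero w)
    · intro hz1
      rw [Complex.exp_eq_one_iff] at hz1
      obtain ⟨t, ht⟩ := hz1
      rw [hw] at ht
      have h2 : (((2 * Real.pi * m / n : ℝ) : ℂ) - ((2 * Real.pi * ℓ / n : ℝ) : ℂ))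
          = ((t : ℂ) * (2 * Real.pi)) := by
        have hI : (Complex.I : ℂ) ≠ 0 := Complex.I_ne_zero
        apply mul_left_cancel₀ hI
        rw [ht]
        ring
      have h3 : (2 * Real.pi * m / n - 2 * Real.pi * ℓ / n : ℝ) = t * (2 * Real.pi) := by
        exact_mod_cast h2
      have hπ : Real.pi ≠ 0 := Real.pi_ne_zero
      have hnR : (n : ℝ) ≠ 0 := Nat.cast_ne_zero.mpr hn.ne'
      field_simp at h3
      have h4' : (2 * Real.pi) * ((m : ℝ) - ℓ) = (2 * Real.pi) * ((t : ℝ) * n) := by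
        linear_combination (2 * Real.pi) * h3
      have h4 : (m : ℝ) - ℓ = (t : ℝ) * n :=
        mul_left_cancel₀ (by positivity : (0:ℝ) < 2 * Real.pi).ne' h4'
      have h5 : (m : ℤ) - ℓ = t * n := by exact_mod_cast h4
      have hn1 : (1 : ℤ) ≤ (n : ℤ) := by exact_mod_cast hn
      rcases lt_trichotomy t 0 with ht' | rfl | ht'
      · have h7 : t * (n : ℤ) ≤ -(n : ℤ) := by nlinarith
        have h8 : (m : ℤ) - ℓ ≤ -(n : ℤ) := h5 ▸ h7
        omega
      · simp at h5
        omega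
      · have h7 : (n : ℤ) ≤ t * n := by nlinarith
        have h8 : (n : ℤ) ≤ (m : ℤ) - ℓ := h5 ▸ h7
        omega
    · rw [← Complex.exp_nat_mul]
      have h6 : (n : ℂ) * (Complex.I * (((2 * Real.pi * m / n : ℝ) : ℂ)
          - ((2 * Real.pi * ℓ / n : ℝ) : ℂ))) = (((m : ℤ) - (ℓ : ℤ) : ℤ) : ℂ) * (2 * Real.pi * Complex.I) := by
        push_cast
        field_simp
      rw [h6]
      exact Complex.exp_int_mul_two_pi_mul_I _

lemma parseval (n : ℕ) (hn : 0 < n) (F : ℝ → ℂ) :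
    ∑ k ∈ Finset.Icc (-(((n - 1) / 2 : ℕ) : ℤ)) ((n / 2 : ℕ) : ℤ), ‖dftCoeff n F k‖ ^ 2
      = (n : ℝ)⁻¹ * ∑ ℓ ∈ Finset.range n, ‖F (2 * Real.pi * ℓ / n)‖ ^ 2 := by
  have hnc : (n : ℂ) ≠ 0 := Nat.cast_ne_zero.mpr hn.ne'
  set S := Finset.Icc (-(((n - 1) / 2 : ℕ) : ℤ)) ((n / 2 : ℕ) : ℤ) with hS
  set E : ℤ → ℕ → ℂ :=
    fun k ℓ => Complex.exp (-Complex.I * (k : ℂ) * ((2 * Real.pi * ℓ / n : ℝ) : ℂ)) with hE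
  set G : ℕ → ℂ := fun ℓ => F (2 * Real.pi * ℓ / n) with hG
  have hdft : ∀ k : ℤ, dftCoeff n F k
      = (n : ℂ)⁻¹ * ∑ ℓ ∈ Finset.range n, E k ℓ * G ℓ := fun k => rfl
  have key : ∀ z : ℂ, z * (starRingEnd ℂ) z = ((‖z‖ : ℝ) : ℂ) ^ 2 := fun z => by
    rw [Complex.mul_conj, Complex.normSq_eq_norm_sq]
    norm_cast
  have hC : ∑ k ∈ S, dftCoeff n F k * (starRingEnd ℂ) (dftCoeff n F k)
      = (n : ℂ)⁻¹ * ∑ ℓ ∈ Finset.range n, G ℓ * (starRingEnd ℂ) (G ℓ) := by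
    have expand : ∀ k : ℤ, dftCoeff n F k * (starRingEnd ℂ) (dftCoeff n F k)
        = (n : ℂ)⁻¹ * (n : ℂ)⁻¹ * ∑ ℓ ∈ Finset.range n, ∑ m ∈ Finset.range n,
            (G ℓ * (starRingEnd ℂ) (G m)) * (E k ℓ * (starRingEnd ℂ) (E k m)) := by
      intro k
      rw [hdft k, map_mul, map_sum, map_inv₀, map_natCast]
      rw [mul_mul_mul_comm, Finset.sum_mul_sum]
      congr 1
      apply Finset.sum_congr rfl; intro ℓ _
      apply Finset.sum_congr rfl; intro m _
      rw [map_mul]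
      ring
    calc ∑ k ∈ S, dftCoeff n F k * (starRingEnd ℂ) (dftCoeff n F k)
        = (n : ℂ)⁻¹ * (n : ℂ)⁻¹ * ∑ k ∈ S, ∑ ℓ ∈ Finset.range n, ∑ m ∈ Finset.range n,
            (G ℓ * (starRingEnd ℂ) (G m)) * (E k ℓ * (starRingEnd ℂ) (E k m)) := by
          rw [Finset.mul_sum]
          exact Finset.sum_congr rfl fun k _ => expand k
      _ = (n : ℂ)⁻¹ * (n : ℂ)⁻¹ * ∑ ℓ ∈ Finset.range n, ∑ m ∈ Finset.range n,
            (G ℓ * (starRingEnd ℂ) (G m)) * ∑ k ∈ S, E k ℓ * (starRingEnd ℂ) (E k m) := by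
          congr 1
          rw [Finset.sum_comm]
          apply Finset.sum_congr rfl; intro ℓ _
          rw [Finset.sum_comm]
          apply Finset.sum_congr rfl; intro m _
          rw [Finset.mul_sum]
      _ = (n : ℂ)⁻¹ * (n : ℂ)⁻¹ * ∑ ℓ ∈ Finset.range n,
            (G ℓ * (starRingEnd ℂ) (G ℓ)) * (n : ℂ) := by
          congr 1
          apply Finset.sum_congr rfl; intro ℓ hℓ
          calc ∑ m ∈ Finset.range n,
                (G ℓ * (starRingEnd ℂ) (G m)) * ∑ k ∈ S, E k ℓ * (starRingEnd ℂ) (E k m)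
              = ∑ m ∈ Finset.range n,
                  (if ℓ = m then (G ℓ * (starRingEnd ℂ) (G m)) * (n : ℂ) else 0) := by
                apply Finset.sum_congr rfl; intro m hm
                rw [hS] at *
                rw [orth_sum n hn ℓ m (Finset.mem_range.mp hℓ) (Finset.mem_range.mp hm)]
                split <;> simp
            _ = (G ℓ * (starRingEnd ℂ) (G ℓ)) * (n : ℂ) := by
                rw [Finset.sum_ite_eq, if_pos hℓ]
      _ = (n : ℂ)⁻¹ * ∑ ℓ ∈ Finset.range n, G ℓ * (starRingEnd ℂ) (G ℓ) := by
          rw [← Finset.sum_mul]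
          field_simp
  have h1 : ((∑ k ∈ S, ‖dftCoeff n F k‖ ^ 2 : ℝ) : ℂ)
      = (((n : ℝ)⁻¹ * ∑ ℓ ∈ Finset.range n, ‖G ℓ‖ ^ 2 : ℝ) : ℂ) := by
    push_cast
    simp_rw [← key]
    exact hC
  exact_mod_cast h1


/-- **`C⁰₀(ℝ) → L²(ℝ)` bound for the rational interpolation operator.**
Fix `β > 0`. There is a constant `C` such that for every `n > 1` and every
continuous `f : ℝ → ℂ` with `f(x) → 0` as `|x| → ∞` (with associated periodic
function `F`), `R_n f ∈ L²(ℝ)` and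
`(∫ |R_n f(x)|² dx)^{1/2} ≤ C n (log n) sup_x |f(x)|`. -/
theorem ratInterp_L2_norm (β : ℝ) (hβ : 0 < β) :
    ∃ C : ℝ, 0 < C ∧ ∀ n : ℕ, 1 < n → ∀ f F : ℝ → ℂ,
      Continuous f →
      Filter.Tendsto f (Filter.cocompact ℝ) (nhds 0) →
      Function.Periodic F (2 * Real.pi) →
      (∀ θ ∈ Set.Ioo (0 : ℝ) (2 * Real.pi), F θ = f (Tmap β θ)) →
      F 0 = 0 →
      MemLp (fun x => ratInterp β n F x) 2 volume ∧
      (∫ x : ℝ, ‖ratInterp β n F x‖ ^ 2) ^ ((1 : ℝ) / 2)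
        ≤ C * n * Real.log n * ⨆ x : ℝ, ‖f x‖ := by
  have hsq : (0:ℝ) ≤ 8 * Real.pi * β := by positivity
  have hlog2 : 0 < Real.log 2 := Real.log_pos (by norm_num)
  set C : ℝ := Real.sqrt (8 * Real.pi * β) / Real.log 2 + 1 with hCdef
  have hCpos : 0 < C := by positivity
  refine ⟨C, hCpos, ?_⟩
  intro n hn f F hf htf hFper hFval hF0
  have hn0 : 0 < n := by omega
  have hnR : (0:ℝ) < n := by exact_mod_cast hn0
  set M : ℝ := ⨆ x : ℝ, ‖f x‖ with hMdef
  set S := Finset.Icc (-(((n - 1) / 2 : ℕ) : ℤ)) ((n / 2 : ℕ) : ℤ) with hSdef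
  set c : ℤ → ℂ := fun k => dftCoeff n F k with hc
  have hcard : S.card = n := by rw [hSdef]; exact card_icc n hn0
  -- boundedness of f
  have hBdd : BddAbove (Set.range fun x : ℝ => ‖f x‖) := by
    let f₀ : ZeroAtInftyContinuousMap ℝ ℂ :=
      { toContinuousMap := ⟨f, hf⟩, zero_at_infty' := htf }
    refine ⟨‖f₀.toBCF‖, ?_⟩
    rintro y ⟨x, rfl⟩
    exact BoundedContinuousFunction.norm_coe_le_norm f₀.toBCF x
  have hM : ∀ x : ℝ, ‖f x‖ ≤ M := fun x => le_ciSup hBdd x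
  have hM0 : 0 ≤ M := le_trans (norm_nonneg (f 0)) (hM 0)
  -- bound at the nodes
  have hFnode : ∀ ℓ ∈ Finset.range n, ‖F (2 * Real.pi * ℓ / n)‖ ≤ M := by
    intro ℓ hℓ
    rcases Nat.eq_zero_or_pos ℓ with rfl | hℓ1
    · simp only [Nat.cast_zero, mul_zero, zero_div, hF0, norm_zero]
      exact hM0
    · have hℓn : ℓ < n := Finset.mem_range.mp hℓ
      have h1 : (0:ℝ) < 2 * Real.pi * ℓ / n := by
        have : (0:ℝ) < (ℓ:ℝ) := by exact_mod_cast hℓ1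
        positivity
      have h2 : 2 * Real.pi * ℓ / n < 2 * Real.pi := by
        rw [div_lt_iff₀ hnR]
        have : (ℓ:ℝ) < n := by exact_mod_cast hℓn
        nlinarith [Real.pi_pos]
      rw [hFval _ ⟨h1, h2⟩]
      exact hM _
  -- Parseval bound
  have hpars : ∑ k ∈ S, ‖c k‖ ^ 2 ≤ M ^ 2 := by
    rw [hSdef]
    rw [parseval n hn0 F]
    have hterm : ∑ ℓ ∈ Finset.range n, ‖F (2 * Real.pi * ℓ / n)‖ ^ 2 ≤ n * M ^ 2 := by
      have := Finset.sum_le_card_nsmul (Finset.range n)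
        (fun ℓ => ‖F (2 * Real.pi * ℓ / n)‖ ^ 2) (M ^ 2) (fun ℓ hℓ =>
          pow_le_pow_left₀ (norm_nonneg _) (hFnode ℓ hℓ) 2)
      simpa [Finset.card_range, nsmul_eq_mul] using this
    calc (n:ℝ)⁻¹ * ∑ ℓ ∈ Finset.range n, ‖F (2 * Real.pi * ℓ / n)‖ ^ 2
        ≤ (n:ℝ)⁻¹ * (n * M ^ 2) := by
          apply mul_le_mul_of_nonneg_left hterm
          positivity
      _ = M ^ 2 := by field_simp
  -- membership
  have hmemk : ∀ k : ℤ, MemLp (fun x : ℝ => c k * (Mob β x ^ k - 1)) 2 volume :=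
    fun k => (g_memLp β hβ k).const_mul _
  have hsum_eq : (fun x => ratInterp β n F x)
      = ∑ k ∈ S, fun x : ℝ => c k * (Mob β x ^ k - 1) := by
    ext x
    simp [ratInterp, Finset.sum_apply, hSdef, hc]
  have hmem : MemLp (fun x => ratInterp β n F x) 2 volume := by
    rw [hsum_eq]
    exact memLp_finset_sum' S fun k _ => hmemk k
  refine ⟨hmem, ?_⟩
  -- the L² estimate
  set b : ℤ → ℝ := fun k => Real.sqrt (8 * Real.pi * β * |(k : ℝ)|) with hb
  have hbnn : ∀ k, 0 ≤ b k := fun k => Real.sqrt_nonneg _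
  set Y : ℝ := ∑ k ∈ S, ‖c k‖ * b k with hY
  have hYnn : 0 ≤ Y :=
    Finset.sum_nonneg fun k _ => mul_nonneg (norm_nonneg _) (hbnn k)
  -- eLpNorm identification
  have heq : ENNReal.ofReal ((∫ x : ℝ, ‖ratInterp β n F x‖ ^ 2) ^ ((1:ℝ)/2))
      = eLpNorm (fun x => ratInterp β n F x) 2 volume := by
    rw [hmem.eLpNorm_eq_integral_rpow_norm two_ne_zero ENNReal.ofNat_ne_top]
    congr 1
    have htr : (2:ℝ≥0∞).toReal = 2 := by simp
    rw [htr]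
    have hint : (∫ x : ℝ, ‖ratInterp β n F x‖ ^ (2:ℝ)) = ∫ x : ℝ, ‖ratInterp β n F x‖ ^ 2 := by
      congr 1
      ext x
      rw [Real.rpow_two]
    rw [hint, one_div]
  -- triangle inequality at the eLpNorm level
  have htri : eLpNorm (fun x => ratInterp β n F x) 2 volume ≤ ENNReal.ofReal Y := by
    calc eLpNorm (fun x => ratInterp β n F x) 2 volume
        ≤ ∑ k ∈ S, eLpNorm (fun x : ℝ => c k * (Mob β x ^ k - 1)) 2 volume := by
          rw [hsum_eq]
          exact eLpNorm_sum_le (fun k _ => (hmemk k).aestronglyMeasurable) one_le_two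
      _ ≤ ∑ k ∈ S, ENNReal.ofReal (‖c k‖ * b k) := by
          apply Finset.sum_le_sum
          intro k _
          have hsmul : (fun x : ℝ => c k * (Mob β x ^ k - 1))
              = c k • fun x : ℝ => Mob β x ^ k - 1 := rfl
          rw [hsmul, eLpNorm_const_smul, ENNReal.ofReal_mul (norm_nonneg _),
            ← ofReal_norm_eq_enorm]
          exact mul_le_mul_right
            (eLpNorm_le_of_int_sq_le (g_memLp β hβ k) (g_int_le β hβ k)) _
      _ = ENNReal.ofReal Y := by
          rw [hY, ENNReal.ofReal_sum_of_nonneg]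
          intro k _
          exact mul_nonneg (norm_nonneg _) (hbnn k)
  have hXY : (∫ x : ℝ, ‖ratInterp β n F x‖ ^ 2) ^ ((1:ℝ)/2) ≤ Y :=
    (ENNReal.ofReal_le_ofReal_iff hYnn).mp (le_trans (le_of_eq heq) htri)
  -- Cauchy–Schwarz
  have hCS : Y ^ 2 ≤ (∑ k ∈ S, ‖c k‖ ^ 2) * (∑ k ∈ S, b k ^ 2) :=
    Finset.sum_mul_sq_le_sq_mul_sq S (fun k => ‖c k‖) b
  have hbsq : ∑ k ∈ S, b k ^ 2 ≤ (8 * Real.pi * β) * n ^ 2 := by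
    have h1 : ∀ k ∈ S, b k ^ 2 ≤ 8 * Real.pi * β * n := by
      intro k hk
      rw [hb]
      rw [Real.sq_sqrt (by positivity)]
      have hkn : |(k:ℝ)| ≤ n := by
        rw [hSdef, Finset.mem_Icc] at hk
        have h2 : -(n:ℤ) ≤ k ∧ k ≤ (n:ℤ) := by omega
        rw [abs_le]
        constructor
        · exact_mod_cast h2.1
        · exact_mod_cast h2.2
      have h8 : (0:ℝ) ≤ 8 * Real.pi * β := hsq
      calc 8 * Real.pi * β * |(k:ℝ)| ≤ 8 * Real.pi * β * n := by
            exact mul_le_mul_of_nonneg_left hkn h8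
        _ = 8 * Real.pi * β * n := rfl
    have h3 := Finset.sum_le_card_nsmul S _ _ h1
    rw [hcard, nsmul_eq_mul] at h3
    calc ∑ k ∈ S, b k ^ 2 ≤ (n : ℝ) * (8 * Real.pi * β * n) := h3
      _ = (8 * Real.pi * β) * n ^ 2 := by ring
  have hbsq0 : 0 ≤ ∑ k ∈ S, b k ^ 2 := Finset.sum_nonneg fun k _ => sq_nonneg _
  have hY2 : Y ^ 2 ≤ (M * (Real.sqrt (8 * Real.pi * β) * n)) ^ 2 := by
    calc Y ^ 2 ≤ (∑ k ∈ S, ‖c k‖ ^ 2) * (∑ k ∈ S, b k ^ 2) := hCS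
      _ ≤ M ^ 2 * ((8 * Real.pi * β) * n ^ 2) :=
          mul_le_mul hpars hbsq hbsq0 (sq_nonneg M)
      _ = (M * (Real.sqrt (8 * Real.pi * β) * n)) ^ 2 := by
          rw [mul_pow, mul_pow, Real.sq_sqrt hsq]
  have hprod0 : 0 ≤ M * (Real.sqrt (8 * Real.pi * β) * n) := by positivity
  have hYle : Y ≤ M * (Real.sqrt (8 * Real.pi * β) * n) := by
    calc Y = Real.sqrt (Y ^ 2) := (Real.sqrt_sq hYnn).symm
      _ ≤ Real.sqrt ((M * (Real.sqrt (8 * Real.pi * β) * n)) ^ 2) := Real.sqrt_le_sqrt hY2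
      _ = M * (Real.sqrt (8 * Real.pi * β) * n) := Real.sqrt_sq hprod0
  have hlogn : Real.log 2 ≤ Real.log n := Real.log_le_log (by norm_num) (by exact_mod_cast hn)
  have hlogn0 : 0 ≤ Real.log n := le_trans hlog2.le hlogn
  have hsqrt0 : 0 ≤ Real.sqrt (8 * Real.pi * β) := Real.sqrt_nonneg _
  calc (∫ x : ℝ, ‖ratInterp β n F x‖ ^ 2) ^ ((1:ℝ)/2) ≤ Y := hXY
    _ ≤ M * (Real.sqrt (8 * Real.pi * β) * n) := hYle
    _ = (Real.sqrt (8 * Real.pi * β) / Real.log 2) * n * Real.log 2 * M := by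
        field_simp
    _ ≤ (Real.sqrt (8 * Real.pi * β) / Real.log 2) * n * Real.log n * M := by
        gcongr
    _ ≤ C * n * Real.log n * M := by
        gcongr
        rw [hCdef]
        linarith
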